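/- For every ε > 0 there exists a constant C(ε) with the following property. Let g ≥ 2 be an integer, let Q be the product of the distinct primes dividing g, and let p be a prime with p ≡ 1 (mod Q). Let A and B be subsets of ℤ/pℤ such that for every a ∈ A and b ∈ B there exist a prime q dividing g and an element y ∈ ℤ/pℤ with a + b = y^q in ℤ/pℤ. Then |A| · |B| ≤ C(ε) · p^{1+ε}. -/

import Mathlib

open Finset Nat


private lemma max'_ge_card (S : Finset ℕ) (hne : S.Nonempty) (h2 : ∀ q ∈ S, 2 ≤ q) :
    S.card + 1 ≤ S.max' hne := by
  have hsub : S ⊆ Finset.Icc 2 (S.max' hne) := fun x hx =>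
    Finset.mem_Icc.mpr ⟨h2 x hx, S.le_max' x hx⟩
  have h := Finset.card_le_card hsub
  rw [Nat.card_Icc] at h
  have h2m : 2 ≤ S.max' hne := h2 _ (S.max'_mem hne)
  omega

private lemma factorial_le_prod : ∀ (S : Finset ℕ), (∀ q ∈ S, 2 ≤ q) →
    (S.card)! ≤ ∏ q ∈ S, q := by
  intro S
  induction S using Finset.strongInduction with
  | _ S ih =>
    intro h2
    rcases S.eq_empty_or_nonempty with rfl | hne
    · simp
    · have hmem : S.max' hne ∈ S := S.max'_mem hne
      have hx := max'_ge_card S hne h2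
      have herase := ih (S.erase (S.max' hne)) (Finset.erase_ssubset hmem)
        (fun q hq => h2 q (Finset.mem_of_mem_erase hq))
      rw [← Finset.mul_prod_erase S _ hmem]
      rw [Finset.card_erase_of_mem hmem] at herase
      have hc1 : 1 ≤ S.card := Finset.card_pos.mpr hne
      calc (S.card)! = S.card * (S.card - 1)! := by
            obtain ⟨n, hn⟩ := Nat.exists_eq_succ_of_ne_zero (by omega : S.card ≠ 0)
            rw [hn, Nat.factorial_succ, Nat.succ_sub_one]
        _ ≤ S.max' hne * ∏ q ∈ S.erase (S.max' hne), q := Nat.mul_le_mul (by omega) herase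

private lemma inv_card_le_prod : ∀ (S : Finset ℕ), (∀ q ∈ S, 2 ≤ q) →
    ((S.card : ℝ) + 1)⁻¹ ≤ ∏ q ∈ S, (1 - (q : ℝ)⁻¹) := by
  intro S
  induction S using Finset.strongInduction with
  | _ S ih =>
    intro h2
    rcases S.eq_empty_or_nonempty with rfl | hne
    · simp
    · have hmem : S.max' hne ∈ S := S.max'_mem hne
      have hx := max'_ge_card S hne h2
      have herase := ih (S.erase (S.max' hne)) (Finset.erase_ssubset hmem)
        (fun q hq => h2 q (Finset.mem_of_mem_erase hq))
      rw [Finset.card_erase_of_mem hmem] at herase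
      have hc1 : 1 ≤ S.card := Finset.card_pos.mpr hne
      rw [← Finset.mul_prod_erase S _ hmem]
      have hm2 : (2:ℝ) ≤ S.max' hne := by exact_mod_cast h2 _ hmem
      have hmc : (S.card : ℝ) + 1 ≤ S.max' hne := by exact_mod_cast hx
      have hcast : ((S.card - 1 : ℕ) : ℝ) + 1 = (S.card : ℝ) := by
        have : ((S.card - 1 : ℕ) : ℝ) = (S.card : ℝ) - 1 := by
          push_cast [hc1]; ring
        rw [this]; ring
      rw [hcast] at herase
      have hfac : (0:ℝ) < 1 - (S.max' hne : ℝ)⁻¹ := by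
        have : (S.max' hne : ℝ)⁻¹ ≤ 2⁻¹ := by
          apply inv_anti₀ <;> linarith
        linarith
      calc ((S.card : ℝ) + 1)⁻¹
          ≤ (1 - (S.max' hne : ℝ)⁻¹) * (S.card : ℝ)⁻¹ := by
            have hSpos : (0:ℝ) < S.card := by exact_mod_cast hc1
            have hmpos : (0:ℝ) < S.max' hne := by linarith
            have heq : (1 - (S.max' hne : ℝ)⁻¹) * (S.card : ℝ)⁻¹
                = ((S.max' hne : ℝ) - 1) / (S.max' hne * S.card) := by
              field_simp
            rw [heq, inv_eq_one_div, div_le_div_iff₀ (by positivity) (by positivity)]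
            nlinarith
        _ ≤ (1 - (S.max' hne : ℝ)⁻¹) * ∏ q ∈ S.erase (S.max' hne), (1 - (q:ℝ)⁻¹) := by
            apply mul_le_mul_of_nonneg_left _ hfac.le
            exact le_trans (le_of_eq (by rw [inv_eq_one_div])) herase


section CharCore
variable {p : ℕ} [hp : Fact p.Prime]

private lemma corr_sum (χ : MulChar (ZMod p) ℂ) (hχ : χ ≠ 1) {w : ZMod p} (hw : w ≠ 0) :
    ∑ x : ZMod p, χ x * χ⁻¹ (x + w) = -1 := by
  have hfield : ∀ x : ZMod p, x ≠ -w → x + w ≠ 0 := by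
    intro x hx h
    exact hx (by linear_combination h)
  have key : ∑ x ∈ univ.erase (-w), χ x * χ⁻¹ (x + w) = ∑ t ∈ univ.erase 1, χ t := by
    refine Finset.sum_bij' (fun x _ => x * (x + w)⁻¹) (fun t _ => w * t * (1 - t)⁻¹)
      ?_ ?_ ?_ ?_ ?_
    · intro x hx
      rw [Finset.mem_erase] at hx ⊢
      refine ⟨?_, Finset.mem_univ _⟩
      intro h1
      beta_reduce at h1
      have hxw := hfield x hx.1
      field_simp at h1
      exact hw (by linear_combination -h1)
    · intro t ht
      rw [Finset.mem_erase] at ht ⊢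
      refine ⟨?_, Finset.mem_univ _⟩
      intro h1
      beta_reduce at h1
      have h1t : (1 : ZMod p) - t ≠ 0 := sub_ne_zero.mpr (Ne.symm ht.1)
      apply hw
      have := mul_eq_mul_right_iff.mpr (Or.inl h1 : _ ∨ ((1:ZMod p) - t)⁻¹ = 0)
      field_simp at h1
      linear_combination w * h1
    · intro x hx
      rw [Finset.mem_erase] at hx
      have hxw := hfield x hx.1
      beta_reduce
      have hstep : 1 - x * (x + w)⁻¹ = w * (x + w)⁻¹ := by
        field_simp
        ring
      rw [hstep, mul_inv, inv_inv]
      field_simp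
    · intro t ht
      rw [Finset.mem_erase] at ht
      have h1t : (1 : ZMod p) - t ≠ 0 := sub_ne_zero.mpr (Ne.symm ht.1)
      beta_reduce
      have hstep : w * t * (1 - t)⁻¹ + w = w * (1 - t)⁻¹ := by
        field_simp
        ring
      rw [hstep, mul_inv, inv_inv]
      field_simp
    · intro x hx
      beta_reduce
      rw [MulChar.inv_apply', ← map_mul]
  have hsplit : ∑ x : ZMod p, χ x * χ⁻¹ (x + w)
      = ∑ x ∈ univ.erase (-w), χ x * χ⁻¹ (x + w) + χ (-w) * χ⁻¹ (-w + w) :=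
    (Finset.sum_erase_add _ _ (Finset.mem_univ (-w))).symm
  have hzero : χ (-w) * χ⁻¹ (-w + w) = 0 := by
    rw [neg_add_cancel, MulChar.map_zero, mul_zero]
  rw [hsplit, hzero, add_zero, key, Finset.sum_erase_eq_sub (Finset.mem_univ 1),
    MulChar.sum_eq_zero_of_ne_one hχ, χ.map_one]
  ring

end CharCore


section CharCore2
variable {p : ℕ} [hp : Fact p.Prime]


private lemma second_moment (χ : MulChar (ZMod p) ℂ) (hχ : χ ≠ 1) (A : Finset (ZMod p)) :
    ∑ x : ZMod p, ‖∑ a ∈ A, χ (a + x)‖ ^ 2 ≤ (p : ℝ) * A.card := by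
  have hdiag : ∀ a : ZMod p, ∑ x : ZMod p, χ (a + x) * χ⁻¹ (a + x) = (p : ℂ) - 1 := by
    intro a
    have reindex : ∑ x : ZMod p, χ (a + x) * χ⁻¹ (a + x) = ∑ y : ZMod p, χ y * χ⁻¹ y :=
      Fintype.sum_bijective (fun x => a + x) (Equiv.addLeft a).bijective _ _ (fun x => rfl)
    rw [reindex]
    have h1 : ∀ y : ZMod p, χ y * χ⁻¹ y = (1 : MulChar (ZMod p) ℂ) y := by
      intro y
      rw [← mul_inv_cancel χ, MulChar.coeToFun_mul, Pi.mul_apply]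
    rw [Finset.sum_congr rfl (fun y _ => h1 y), MulChar.sum_one_eq_card_units,
      ZMod.card_units_eq_totient, Nat.totient_prime hp.out]
    have : (1:ℕ) ≤ p := hp.out.one_lt.le
    push_cast [Nat.cast_sub this]
    ring
  have hoff : ∀ a a' : ZMod p, a ≠ a' →
      ∑ x : ZMod p, χ (a + x) * χ⁻¹ (a' + x) = -1 := by
    intro a a' hne
    have reindex : ∑ x : ZMod p, χ (a + x) * χ⁻¹ (a' + x)
        = ∑ y : ZMod p, χ y * χ⁻¹ (y + (a' - a)) := by
      refine Fintype.sum_bijective (fun x : ZMod p => a + x) (Equiv.addLeft a).bijective _ _ ?_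
      intro x
      beta_reduce
      congr 1
      · congr 1
        ring
    rw [reindex]
    exact corr_sum χ hχ (sub_ne_zero.mpr (Ne.symm hne))
  have hsum : ∑ x : ZMod p, (∑ a ∈ A, χ (a + x)) * (starRingEnd ℂ) (∑ a ∈ A, χ (a + x))
      = (A.card : ℂ) * ((p : ℂ) - A.card) := by
    have expand : ∀ x : ZMod p, (∑ a ∈ A, χ (a + x)) * (starRingEnd ℂ) (∑ a ∈ A, χ (a + x))
        = ∑ a ∈ A, ∑ a' ∈ A, χ (a + x) * χ⁻¹ (a' + x) := by
      intro x
      rw [map_sum, Finset.sum_mul_sum]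
      refine Finset.sum_congr rfl fun a _ => Finset.sum_congr rfl fun a' _ => ?_
      rw [starRingEnd_apply, MulChar.star_apply']
    calc ∑ x : ZMod p, (∑ a ∈ A, χ (a + x)) * (starRingEnd ℂ) (∑ a ∈ A, χ (a + x))
        = ∑ x : ZMod p, ∑ a ∈ A, ∑ a' ∈ A, χ (a + x) * χ⁻¹ (a' + x) :=
          Finset.sum_congr rfl fun x _ => expand x
      _ = ∑ a ∈ A, ∑ x : ZMod p, ∑ a' ∈ A, χ (a + x) * χ⁻¹ (a' + x) := Finset.sum_comm
      _ = ∑ a ∈ A, ∑ a' ∈ A, ∑ x : ZMod p, χ (a + x) * χ⁻¹ (a' + x) :=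
          Finset.sum_congr rfl fun a _ => Finset.sum_comm
      _ = (A.card : ℂ) * ((p : ℂ) - A.card) := by
          have inner : ∀ a ∈ A, ∑ a' ∈ A, ∑ x : ZMod p, χ (a + x) * χ⁻¹ (a' + x)
              = (p : ℂ) - A.card := by
            intro a ha
            rw [← Finset.sum_erase_add A _ ha]
            have h1 : ∑ a' ∈ A.erase a, ∑ x : ZMod p, χ (a + x) * χ⁻¹ (a' + x)
                = ∑ _a' ∈ A.erase a, (-1 : ℂ) :=
              Finset.sum_congr rfl fun a' ha' =>
                hoff a a' (Ne.symm (Finset.mem_erase.mp ha').1)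
            have hc1 : 1 ≤ A.card := Finset.card_pos.mpr ⟨a, ha⟩
            rw [h1, Finset.sum_const, hdiag a, Finset.card_erase_of_mem ha,
              nsmul_eq_mul, Nat.cast_sub hc1]
            push_cast
            ring
          rw [Finset.sum_congr rfl inner, Finset.sum_const, nsmul_eq_mul]
  have hreal : ∑ x : ZMod p, ‖∑ a ∈ A, χ (a + x)‖ ^ 2 = (A.card : ℝ) * ((p : ℝ) - A.card) := by
    have h2 : ∀ x : ZMod p, (∑ a ∈ A, χ (a + x)) * (starRingEnd ℂ) (∑ a ∈ A, χ (a + x))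
        = ((‖∑ a ∈ A, χ (a + x)‖ ^ 2 : ℝ) : ℂ) := by
      intro x
      rw [Complex.mul_conj]
      norm_cast
      rw [Complex.normSq_eq_norm_sq]
    rw [Finset.sum_congr rfl (fun x _ => h2 x)] at hsum
    rw [← Complex.ofReal_sum] at hsum
    apply Complex.ofReal_injective
    rw [hsum]
    push_cast
    ring
  rw [hreal]
  have h0 : (0:ℝ) ≤ (A.card : ℝ) := Nat.cast_nonneg _
  nlinarith [sq_nonneg ((A.card : ℝ))]

private lemma char_sum_bound (χ : MulChar (ZMod p) ℂ) (hχ : χ ≠ 1) (A B : Finset (ZMod p)) :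
    ‖∑ a ∈ A, ∑ b ∈ B, χ (a + b)‖ ≤ Real.sqrt ((p : ℝ) * A.card * B.card) := by
  have h1 : ‖∑ a ∈ A, ∑ b ∈ B, χ (a + b)‖ ≤ ∑ b ∈ B, ‖∑ a ∈ A, χ (a + b)‖ := by
    rw [Finset.sum_comm]
    exact norm_sum_le _ _
  have hcs : (∑ b ∈ B, ‖∑ a ∈ A, χ (a + b)‖) ^ 2
      ≤ (B.card : ℝ) * ∑ b ∈ B, ‖∑ a ∈ A, χ (a + b)‖ ^ 2 := by
    have := Finset.sum_mul_sq_le_sq_mul_sq B (fun _ => (1:ℝ))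
      (fun b => ‖∑ a ∈ A, χ (a + b)‖)
    simpa using this
  have hext : ∑ b ∈ B, ‖∑ a ∈ A, χ (a + b)‖ ^ 2 ≤ ∑ x : ZMod p, ‖∑ a ∈ A, χ (a + x)‖ ^ 2 :=
    Finset.sum_le_sum_of_subset_of_nonneg (Finset.subset_univ B)
      (fun x _ _ => sq_nonneg _)
  have hsm := second_moment χ hχ A
  have h2 : (∑ b ∈ B, ‖∑ a ∈ A, χ (a + b)‖) ^ 2 ≤ (p : ℝ) * A.card * B.card := by
    calc (∑ b ∈ B, ‖∑ a ∈ A, χ (a + b)‖) ^ 2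
        ≤ (B.card : ℝ) * ((p : ℝ) * A.card) := by
          refine hcs.trans ?_
          exact mul_le_mul_of_nonneg_left (hext.trans hsm) (Nat.cast_nonneg _)
      _ = (p : ℝ) * A.card * B.card := by ring
  have h3 : ∑ b ∈ B, ‖∑ a ∈ A, χ (a + b)‖ ≤ Real.sqrt ((p : ℝ) * A.card * B.card) := by
    have hnn : (0:ℝ) ≤ ∑ b ∈ B, ‖∑ a ∈ A, χ (a + b)‖ :=
      Finset.sum_nonneg fun b _ => norm_nonneg _
    calc ∑ b ∈ B, ‖∑ a ∈ A, χ (a + b)‖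
        = Real.sqrt ((∑ b ∈ B, ‖∑ a ∈ A, χ (a + b)‖) ^ 2) := (Real.sqrt_sq hnn).symm
      _ ≤ Real.sqrt ((p : ℝ) * A.card * B.card) := Real.sqrt_le_sqrt h2
  exact h1.trans h3

end CharCore2


private lemma prod_mulChar_apply {R R' : Type*} [CommMonoid R] [CommMonoidWithZero R']
    {ι : Type*} (t : Finset ι) (χ : ι → MulChar R R') {x : R} (hx : IsUnit x) :
    (∏ i ∈ t, χ i) x = ∏ i ∈ t, χ i x := by
  induction t using Finset.cons_induction with
  | empty => simp [MulChar.one_apply hx]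
  | cons a s ha ih => rw [Finset.prod_cons, MulChar.coeToFun_mul, Pi.mul_apply, ih,
      Finset.prod_cons]

private lemma growth_bound (ε : ℝ) (hε : 0 < ε) (ω : ℕ) :
    (16 : ℝ) ^ ω ≤ (Real.exp ((16 : ℝ) ^ ((1:ℝ)/ε))) ^ ε * ((Nat.factorial ω : ℝ)) ^ ε := by
  set x : ℝ := (16 : ℝ) ^ ((1:ℝ)/ε) with hxdef
  have hx : 0 < x := Real.rpow_pos_of_pos (by norm_num) _
  have hfac : (0:ℝ) < (Nat.factorial ω : ℝ) := by
    exact_mod_cast Nat.factorial_pos ω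
  have h1 : x ^ ω ≤ Real.exp x * Nat.factorial ω := by
    have hterm : x ^ ω / (Nat.factorial ω : ℝ) ≤ Real.exp x := by
      refine le_trans ?_ (Real.sum_le_exp_of_nonneg hx.le (ω + 1))
      refine Finset.single_le_sum (f := fun i => x ^ i / (Nat.factorial i : ℝ)) ?_ ?_
      · intro i _
        positivity
      · exact Finset.self_mem_range_succ ω
    rw [div_le_iff₀ hfac] at hterm
    exact hterm
  have h2 : (x ^ ω) ^ ε ≤ (Real.exp x * Nat.factorial ω) ^ ε :=
    Real.rpow_le_rpow (by positivity) h1 hε.le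
  have h3 : (x ^ ω) ^ ε = (16 : ℝ) ^ ω := by
    rw [← Real.rpow_natCast x ω, ← Real.rpow_mul hx.le, hxdef,
      ← Real.rpow_mul (by norm_num : (0:ℝ) ≤ 16)]
    rw [show (1/ε) * ((ω:ℝ) * ε) = (ω:ℝ) by field_simp]
    rw [Real.rpow_natCast]
  have h4 : (Real.exp x * Nat.factorial ω) ^ ε
      = (Real.exp x) ^ ε * ((Nat.factorial ω : ℝ)) ^ ε :=
    Real.mul_rpow (Real.exp_pos x).le hfac.le
  rw [h3, h4] at h2
  exact h2





set_option maxHeartbeats 2000000 in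
private lemma main_count (p : ℕ) (hp : p.Prime) (S : Finset ℕ)
    (hS : ∀ q ∈ S, q.Prime ∧ q ∣ p - 1) (A B : Finset (ZMod p))
    (hyp : ∀ a ∈ A, ∀ b ∈ B, ∃ q ∈ S, ∃ y : ZMod p, a + b = y ^ q) :
    (A.card : ℝ) * B.card ≤ 16 ^ S.card * p := by
  classical
  haveI := Fact.mk hp
  have hppos : (0:ℝ) < p := by exact_mod_cast hp.pos
  rcases A.eq_empty_or_nonempty with rfl | hA
  · simp
  rcases B.eq_empty_or_nonempty with rfl | hB
  · simp
  have hq2 : ∀ q ∈ S, 2 ≤ q := fun q hq => (hS q hq).1.two_le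
  have hApos : 0 < A.card := Finset.card_pos.mpr hA
  have hBpos : 0 < B.card := Finset.card_pos.mpr hB
  -- choose characters of exact prime order
  have hchar : ∀ q : ℕ, ∃ χ : MulChar (ZMod p) ℂ, q ∈ S → orderOf χ = q := by
    intro q
    by_cases hq : q ∈ S
    · obtain ⟨hqp, hqd⟩ := hS q hq
      have hcard : q ∣ Fintype.card (ZMod p) - 1 := by rw [ZMod.card]; exact hqd
      obtain ⟨χ, hχ⟩ := MulChar.exists_mulChar_orderOf (ZMod p) hcard
        (Complex.isPrimitiveRoot_exp q hqp.ne_zero)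
      exact ⟨χ, fun _ => hχ⟩
    · exact ⟨1, fun h => absurd h hq⟩
  choose ψ hψ using hchar
  set α : ℕ → ℂ := fun q => 1 - (q : ℂ)⁻¹ with hα
  set β : ℕ → ZMod p → ℂ := fun q x => -(q : ℂ)⁻¹ * ∑ j ∈ Finset.Ico 1 q, (ψ q x) ^ j with hβ
  set F : ZMod p → ℂ := fun x => ∏ q ∈ S, (β q x + α q) with hF
  set K : ℝ := (A.card : ℝ) * B.card with hK
  have hKpos : 0 < K := by
    rw [hK]
    have h1 : (0:ℝ) < A.card := by exact_mod_cast hApos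
    have h2 : (0:ℝ) < B.card := by exact_mod_cast hBpos
    exact mul_pos h1 h2
  set Rt : ℝ := Real.sqrt ((p:ℝ) * A.card * B.card) with hRt
  have hRtnn : 0 ≤ Rt := Real.sqrt_nonneg _
  -- norms of α-factors
  have halphaval : ∀ q ∈ S, ‖α q‖ = 1 - (q:ℝ)⁻¹ := by
    intro q hq
    have h2q : 2 ≤ q := hq2 q hq
    have hqr : (1:ℝ) ≤ (q:ℝ) := by exact_mod_cast Nat.one_le_of_lt h2q
    have hcast : α q = ((1 - (q:ℝ)⁻¹ : ℝ) : ℂ) := by rw [hα]; push_cast; ring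
    rw [hcast, Complex.norm_real, Real.norm_eq_abs, abs_of_nonneg]
    have h1 : (q:ℝ)⁻¹ ≤ 1 := by
      rw [inv_le_one_iff₀]
      right; exact hqr
    linarith
  have halpha : ∀ U : Finset ℕ, U ⊆ S → ‖∏ q ∈ U, α q‖ ≤ 1 := by
    intro U hU
    rw [norm_prod]
    apply Finset.prod_le_one (fun q _ => norm_nonneg _)
    intro q hq
    rw [halphaval q (hU hq)]
    have h2q : 2 ≤ q := hq2 q (hU hq)
    have h0 : (0:ℝ) ≤ (q:ℝ)⁻¹ := by positivity
    linarith
  -- vanishing of F on nonzero sums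
  have hFzero : ∀ a ∈ A, ∀ b ∈ B, a + b ≠ 0 → F (a + b) = 0 := by
    intro a ha b hb hab
    obtain ⟨q, hqS, y, hy⟩ := hyp a ha b hb
    have hqp := (hS q hqS).1
    have hy0 : y ≠ 0 := by
      intro h0
      rw [h0, zero_pow hqp.ne_zero] at hy
      exact hab hy
    have hψ1 : ψ q (a + b) = 1 := by
      have hq1 : (ψ q) ^ q = 1 := by
        have h := pow_orderOf_eq_one (ψ q)
        rwa [hψ q hqS] at h
      have hpa := MulChar.pow_apply' (ψ q) hqp.ne_zero y
      rw [hq1] at hpa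
      rw [hy, map_pow, ← hpa, MulChar.one_apply (isUnit_iff_ne_zero.mpr hy0)]
    apply Finset.prod_eq_zero hqS
    rw [hβ, hα]
    beta_reduce
    rw [hψ1]
    have hsum1 : ∑ j ∈ Finset.Ico 1 q, ((1:ℂ)) ^ j = ((q - 1 : ℕ) : ℂ) := by
      simp [Nat.card_Ico]
    rw [hsum1, Nat.cast_sub hqp.one_lt.le]
    have hqne : (q:ℂ) ≠ 0 := Nat.cast_ne_zero.mpr hqp.ne_zero
    field_simp
    push_cast; ring
  -- value at 0
  have hF0 : ‖F 0‖ ≤ 1 := by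
    have : F 0 = ∏ q ∈ S, α q := by
      rw [hF]
      beta_reduce
      apply Finset.prod_congr rfl
      intro q hq
      have hz : ψ q (0 : ZMod p) = 0 := (ψ q).map_zero
      rw [hβ]
      beta_reduce
      rw [hz]
      have : ∑ j ∈ Finset.Ico 1 q, ((0:ℂ)) ^ j = 0 := by
        apply Finset.sum_eq_zero
        intro j hj
        rw [Finset.mem_Ico] at hj
        exact zero_pow (by omega)
      rw [this, mul_zero, zero_add]
    rw [this]
    exact halpha S le_rfl
  -- Step B : bound for the F-sum
  have hB1 : ‖∑ a ∈ A, ∑ b ∈ B, F (a + b)‖ ≤ Rt := by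
    have inner : ∀ a ∈ A, ‖∑ b ∈ B, F (a + b)‖ ≤ 1 := by
      intro a ha
      have heq : ∑ b ∈ B, F (a + b) = ∑ b ∈ B, if b = -a then F 0 else 0 := by
        apply Finset.sum_congr rfl
        intro b hb
        split_ifs with h
        · rw [h]
          norm_num
        · exact hFzero a ha b hb (fun h0 => h (by linear_combination h0))
      rw [heq, Finset.sum_ite_eq' B (-a) (fun _ => F 0)]
      split_ifs with h
      · exact hF0
      · simp
    calc ‖∑ a ∈ A, ∑ b ∈ B, F (a + b)‖ ≤ ∑ a ∈ A, ‖∑ b ∈ B, F (a + b)‖ := norm_sum_le _ _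
      _ ≤ ∑ _a ∈ A, (1:ℝ) := Finset.sum_le_sum inner
      _ = A.card := by rw [Finset.sum_const, nsmul_eq_mul, mul_one]
      _ ≤ Rt := by
          rw [hRt]
          have hle : ((A.card : ℝ)) ^ 2 ≤ (p:ℝ) * A.card * B.card := by
            have hAp : (A.card : ℝ) ≤ p := by
              have := Finset.card_le_card (Finset.subset_univ A)
              rw [Finset.card_univ, ZMod.card] at this
              exact_mod_cast this
            have hB1' : (1:ℝ) ≤ B.card := by exact_mod_cast hBpos
            have hAnn : (0:ℝ) ≤ A.card := Nat.cast_nonneg _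
            nlinarith
          calc (A.card : ℝ) = Real.sqrt ((A.card:ℝ)^2) := (Real.sqrt_sq (Nat.cast_nonneg _)).symm
            _ ≤ Real.sqrt ((p:ℝ) * A.card * B.card) := Real.sqrt_le_sqrt hle
  -- Step D : bound for each nonempty T
  have hD : ∀ T ∈ S.powerset.erase ∅,
      ‖∑ a ∈ A, ∑ b ∈ B, ∏ q ∈ T, β q (a + b)‖ ≤ Rt := by
    intro T hT
    obtain ⟨hTne0, hTpow⟩ := Finset.mem_erase.mp hT
    have hTsub : T ⊆ S := Finset.mem_powerset.mp hTpow
    have hTne : T.Nonempty := Finset.nonempty_iff_ne_empty.mpr hTne0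
    have hord : ∀ q ∈ T, ∀ e ∈ Finset.Ico 1 q, orderOf ((ψ q) ^ e) = q := by
      intro q hq e he
      have hqp := (hS q (hTsub hq)).1
      rw [Finset.mem_Ico] at he
      have hψq : (ψ q) ^ q = 1 := by
        have h := pow_orderOf_eq_one (ψ q)
        rwa [hψ q (hTsub hq)] at h
      haveI := Fact.mk hqp
      refine orderOf_eq_prime ?_ ?_
      · rw [← pow_mul, mul_comm, pow_mul, hψq, one_pow]
      · intro h1
        have hdvd : q ∣ e := by
          have hd := orderOf_dvd_of_pow_eq_one h1
          rwa [hψ q (hTsub hq)] at hd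
        have := Nat.le_of_dvd (by omega) hdvd
        omega
    have hexp : ∀ x : ZMod p, ∏ q ∈ T, β q x
        = (∏ q ∈ T, -(q:ℂ)⁻¹) * ∑ g ∈ T.pi (fun q => Finset.Ico 1 q),
            ∏ i ∈ T.attach, (ψ i.1 x) ^ (g i.1 i.2) := by
      intro x
      rw [hβ]
      beta_reduce
      rw [Finset.prod_mul_distrib, Finset.prod_sum]
    have hgchar : ∀ g ∈ T.pi (fun q => Finset.Ico 1 q),
        ∃ χ : MulChar (ZMod p) ℂ, χ ≠ 1 ∧
          ∀ x : ZMod p, ∏ i ∈ T.attach, (ψ i.1 x) ^ (g i.1 i.2) = χ x := by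
      intro g hg
      have hmem : ∀ (q : ℕ) (h : q ∈ T), g q h ∈ Finset.Ico 1 q := Finset.mem_pi.mp hg
      refine ⟨∏ i ∈ T.attach, (ψ i.1) ^ (g i.1 i.2), ?_, ?_⟩
      · intro hone
        obtain ⟨q0, hq0⟩ := hTne
        have hq0p := (hS q0 (hTsub hq0)).1
        have hpow : (∏ i ∈ T.attach, (ψ i.1) ^ (g i.1 i.2))
              ^ (∏ i ∈ T.attach.erase ⟨q0, hq0⟩, i.1)
            = ((ψ q0) ^ (g q0 hq0)) ^ (∏ i ∈ T.attach.erase ⟨q0, hq0⟩, i.1) := by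
          rw [← Finset.prod_pow]
          rw [← Finset.prod_erase_mul T.attach _ (Finset.mem_attach T ⟨q0, hq0⟩)]
          have hkill : ∀ i ∈ T.attach.erase ⟨q0, hq0⟩,
              ((ψ i.1) ^ (g i.1 i.2)) ^ (∏ i ∈ T.attach.erase ⟨q0, hq0⟩, i.1) = 1 := by
            intro i hi
            have hdvd : (i.1 : ℕ) ∣ ∏ i ∈ T.attach.erase ⟨q0, hq0⟩, i.1 :=
              Finset.dvd_prod_of_mem _ hi
            refine orderOf_dvd_iff_pow_eq_one.mp ?_
            rw [hord i.1 i.2 _ (hmem i.1 i.2)]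
            exact hdvd
          rw [Finset.prod_congr rfl hkill, Finset.prod_const_one, one_mul]
        rw [hone, one_pow] at hpow
        have hdvd : q0 ∣ ∏ i ∈ T.attach.erase ⟨q0, hq0⟩, i.1 := by
          have hd := orderOf_dvd_of_pow_eq_one hpow.symm
          rwa [hord q0 hq0 _ (hmem q0 hq0)] at hd
        obtain ⟨i, hi, hdd⟩ := (Nat.Prime.prime hq0p).exists_mem_finset_dvd hdvd
        have hip := (hS i.1 (hTsub i.2)).1
        have heq : q0 = i.1 := (Nat.prime_dvd_prime_iff_eq hq0p hip).mp hdd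
        exact (Finset.mem_erase.mp hi).1 (Subtype.ext heq.symm)
      · intro x
        by_cases hx : IsUnit x
        · rw [prod_mulChar_apply _ _ hx]
          refine Finset.prod_congr rfl fun i _ => ?_
          have he := hmem i.1 i.2
          rw [Finset.mem_Ico] at he
          rw [MulChar.pow_apply' (ψ i.1) (by omega : g i.1 i.2 ≠ 0) x]
        · rw [MulChar.map_nonunit _ hx]
          obtain ⟨q0, hq0⟩ := hTne
          refine Finset.prod_eq_zero (Finset.mem_attach T ⟨q0, hq0⟩) ?_
          rw [MulChar.map_nonunit _ hx]
          have he := hmem q0 hq0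
          rw [Finset.mem_Ico] at he
          exact zero_pow (n := g q0 hq0) (by omega)
    choose χg hχg1 hχg2 using hgchar
    have hstep : ∑ a ∈ A, ∑ b ∈ B, ∏ q ∈ T, β q (a + b)
        = (∏ q ∈ T, -(q:ℂ)⁻¹) * ∑ g ∈ (T.pi (fun q => Finset.Ico 1 q)).attach,
            ∑ a ∈ A, ∑ b ∈ B, χg g.1 g.2 (a + b) := by
      have h1 : ∀ a ∈ A, ∀ b ∈ B, ∏ q ∈ T, β q (a + b)
          = (∏ q ∈ T, -(q:ℂ)⁻¹) * ∑ g ∈ (T.pi (fun q => Finset.Ico 1 q)).attach,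
              χg g.1 g.2 (a + b) := by
        intro a _ b _
        rw [hexp (a + b)]
        congr 1
        rw [← Finset.sum_attach (T.pi (fun q => Finset.Ico 1 q))
          (fun g => ∏ i ∈ T.attach, (ψ i.1 (a + b)) ^ (g i.1 i.2))]
        exact Finset.sum_congr rfl fun g _ => hχg2 g.1 g.2 (a + b)
      calc ∑ a ∈ A, ∑ b ∈ B, ∏ q ∈ T, β q (a + b)
          = ∑ a ∈ A, ∑ b ∈ B, (∏ q ∈ T, -(q:ℂ)⁻¹)
              * ∑ g ∈ (T.pi (fun q => Finset.Ico 1 q)).attach, χg g.1 g.2 (a + b) :=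
            Finset.sum_congr rfl fun a ha => Finset.sum_congr rfl fun b hb => h1 a ha b hb
        _ = (∏ q ∈ T, -(q:ℂ)⁻¹) * ∑ a ∈ A, ∑ b ∈ B,
              ∑ g ∈ (T.pi (fun q => Finset.Ico 1 q)).attach, χg g.1 g.2 (a + b) := by
            rw [Finset.mul_sum]
            refine Finset.sum_congr rfl fun a _ => ?_
            rw [Finset.mul_sum]
        _ = (∏ q ∈ T, -(q:ℂ)⁻¹) * ∑ g ∈ (T.pi (fun q => Finset.Ico 1 q)).attach,
              ∑ a ∈ A, ∑ b ∈ B, χg g.1 g.2 (a + b) := by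
            congr 1
            calc ∑ a ∈ A, ∑ b ∈ B, ∑ g ∈ (T.pi (fun q => Finset.Ico 1 q)).attach,
                  χg g.1 g.2 (a + b)
                = ∑ a ∈ A, ∑ g ∈ (T.pi (fun q => Finset.Ico 1 q)).attach,
                    ∑ b ∈ B, χg g.1 g.2 (a + b) :=
                  Finset.sum_congr rfl fun a _ => Finset.sum_comm
              _ = ∑ g ∈ (T.pi (fun q => Finset.Ico 1 q)).attach,
                    ∑ a ∈ A, ∑ b ∈ B, χg g.1 g.2 (a + b) := Finset.sum_comm
    have hcnorm : ‖∏ q ∈ T, -(q:ℂ)⁻¹‖ = ∏ q ∈ T, (q:ℝ)⁻¹ := by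
      rw [norm_prod]
      refine Finset.prod_congr rfl fun q _ => ?_
      rw [norm_neg, norm_inv, Complex.norm_natCast]
    have hcardpi : ((T.pi (fun q => Finset.Ico 1 q)).attach.card : ℝ)
        = ∏ q ∈ T, ((q - 1 : ℕ) : ℝ) := by
      rw [Finset.card_attach, Finset.card_pi]
      rw [Nat.cast_prod]
      refine Finset.prod_congr rfl fun q _ => ?_
      rw [Nat.card_Ico]
    have hsmall : (∏ q ∈ T, (q:ℝ)⁻¹) * (∏ q ∈ T, ((q - 1 : ℕ) : ℝ)) ≤ 1 := by
      rw [← Finset.prod_mul_distrib]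
      apply Finset.prod_le_one
      · intro q _
        positivity
      · intro q hq
        have h2q : 2 ≤ q := hq2 q (hTsub hq)
        have hqpos : (0:ℝ) < q := by exact_mod_cast (by omega : 0 < q)
        have hle : ((q - 1 : ℕ) : ℝ) ≤ (q:ℝ) := by exact_mod_cast Nat.sub_le q 1
        calc (q:ℝ)⁻¹ * ((q - 1 : ℕ) : ℝ) ≤ (q:ℝ)⁻¹ * (q:ℝ) :=
              mul_le_mul_of_nonneg_left hle (by positivity)
          _ = 1 := inv_mul_cancel₀ hqpos.ne'
    calc ‖∑ a ∈ A, ∑ b ∈ B, ∏ q ∈ T, β q (a + b)‖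
        = ‖∏ q ∈ T, -(q:ℂ)⁻¹‖ * ‖∑ g ∈ (T.pi (fun q => Finset.Ico 1 q)).attach,
            ∑ a ∈ A, ∑ b ∈ B, χg g.1 g.2 (a + b)‖ := by rw [hstep, norm_mul]
      _ ≤ ‖∏ q ∈ T, -(q:ℂ)⁻¹‖ * ∑ g ∈ (T.pi (fun q => Finset.Ico 1 q)).attach,
            ‖∑ a ∈ A, ∑ b ∈ B, χg g.1 g.2 (a + b)‖ :=
          mul_le_mul_of_nonneg_left (norm_sum_le _ _) (norm_nonneg _)
      _ ≤ ‖∏ q ∈ T, -(q:ℂ)⁻¹‖ * ∑ _g ∈ (T.pi (fun q => Finset.Ico 1 q)).attach, Rt := by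
          refine mul_le_mul_of_nonneg_left ?_ (norm_nonneg _)
          refine Finset.sum_le_sum fun g _ => ?_
          rw [hRt]
          exact char_sum_bound (χg g.1 g.2) (hχg1 g.1 g.2) A B
      _ = (∏ q ∈ T, (q:ℝ)⁻¹) * ((((T.pi (fun q => Finset.Ico 1 q)).attach.card : ℝ)) * Rt) := by
          rw [hcnorm, Finset.sum_const, nsmul_eq_mul]
      _ = ((∏ q ∈ T, (q:ℝ)⁻¹) * (∏ q ∈ T, ((q - 1 : ℕ) : ℝ))) * Rt := by
          rw [hcardpi]; ring
      _ ≤ Rt := mul_le_of_le_one_left hRtnn hsmall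
  -- expansion of F
  have hFexp : ∀ x : ZMod p, F x
      = ∑ T ∈ S.powerset, (∏ q ∈ T, β q x) * ∏ q ∈ S \ T, α q := by
    intro x
    rw [hF]
    beta_reduce
    exact Finset.prod_add (fun q => β q x) α S
  have htot : ∑ a ∈ A, ∑ b ∈ B, F (a + b)
      = ∑ T ∈ S.powerset, (∏ q ∈ S \ T, α q) * (∑ a ∈ A, ∑ b ∈ B, ∏ q ∈ T, β q (a + b)) := by
    calc ∑ a ∈ A, ∑ b ∈ B, F (a + b)
        = ∑ a ∈ A, ∑ b ∈ B, ∑ T ∈ S.powerset, (∏ q ∈ T, β q (a+b)) * ∏ q ∈ S \ T, α q :=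
          Finset.sum_congr rfl fun a _ => Finset.sum_congr rfl fun b _ => hFexp (a+b)
      _ = ∑ T ∈ S.powerset, ∑ a ∈ A, ∑ b ∈ B, (∏ q ∈ T, β q (a+b)) * ∏ q ∈ S \ T, α q := by
          calc ∑ a ∈ A, ∑ b ∈ B, ∑ T ∈ S.powerset, (∏ q ∈ T, β q (a+b)) * ∏ q ∈ S \ T, α q
              = ∑ a ∈ A, ∑ T ∈ S.powerset, ∑ b ∈ B, (∏ q ∈ T, β q (a+b)) * ∏ q ∈ S \ T, α q :=
                Finset.sum_congr rfl fun a _ => Finset.sum_comm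
            _ = ∑ T ∈ S.powerset, ∑ a ∈ A, ∑ b ∈ B, (∏ q ∈ T, β q (a+b)) * ∏ q ∈ S \ T, α q :=
                Finset.sum_comm
      _ = ∑ T ∈ S.powerset, (∏ q ∈ S \ T, α q) * (∑ a ∈ A, ∑ b ∈ B, ∏ q ∈ T, β q (a + b)) := by
          refine Finset.sum_congr rfl fun T _ => ?_
          rw [Finset.mul_sum]
          refine Finset.sum_congr rfl fun a _ => ?_
          rw [Finset.mul_sum]
          refine Finset.sum_congr rfl fun b _ => ?_
          ring
  have hsplit : (∏ q ∈ S, α q) * ((A.card : ℂ) * B.card)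
      = (∑ a ∈ A, ∑ b ∈ B, F (a + b))
        - ∑ T ∈ S.powerset.erase ∅,
            (∏ q ∈ S \ T, α q) * (∑ a ∈ A, ∑ b ∈ B, ∏ q ∈ T, β q (a + b)) := by
    rw [htot, ← Finset.add_sum_erase _ _ (Finset.empty_mem_powerset S)]
    have hemp : (∏ q ∈ S \ (∅:Finset ℕ), α q)
          * (∑ a ∈ A, ∑ b ∈ B, ∏ q ∈ (∅:Finset ℕ), β q (a + b))
        = (∏ q ∈ S, α q) * ((A.card : ℂ) * B.card) := by
      rw [Finset.sdiff_empty]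
      congr 1
      simp only [Finset.prod_empty, Finset.sum_const, nsmul_eq_mul, mul_one]
    rw [hemp]
    ring
  have hnormleft : ‖(∏ q ∈ S, α q) * ((A.card : ℂ) * B.card)‖
      = (∏ q ∈ S, (1 - (q:ℝ)⁻¹)) * K := by
    rw [norm_mul, norm_mul, Complex.norm_natCast, Complex.norm_natCast, norm_prod, hK]
    congr 1
    exact Finset.prod_congr rfl halphaval
  have hcount : ∑ _T ∈ S.powerset.erase ∅, Rt = ((2:ℝ)^S.card - 1) * Rt := by
    rw [Finset.sum_const, nsmul_eq_mul, Finset.card_erase_of_mem (Finset.empty_mem_powerset S),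
      Finset.card_powerset]
    have h1 : (1:ℕ) ≤ 2 ^ S.card := Nat.one_le_two_pow
    rw [Nat.cast_sub h1]
    push_cast
    ring
  have hY : ‖∑ T ∈ S.powerset.erase ∅,
        (∏ q ∈ S \ T, α q) * (∑ a ∈ A, ∑ b ∈ B, ∏ q ∈ T, β q (a + b))‖
      ≤ ((2:ℝ)^S.card - 1) * Rt := by
    calc ‖∑ T ∈ S.powerset.erase ∅,
          (∏ q ∈ S \ T, α q) * (∑ a ∈ A, ∑ b ∈ B, ∏ q ∈ T, β q (a + b))‖
        ≤ ∑ T ∈ S.powerset.erase ∅,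
            ‖(∏ q ∈ S \ T, α q) * (∑ a ∈ A, ∑ b ∈ B, ∏ q ∈ T, β q (a + b))‖ :=
          norm_sum_le _ _
      _ ≤ ∑ _T ∈ S.powerset.erase ∅, Rt := by
          refine Finset.sum_le_sum fun T hT => ?_
          rw [norm_mul]
          calc ‖∏ q ∈ S \ T, α q‖ * ‖∑ a ∈ A, ∑ b ∈ B, ∏ q ∈ T, β q (a + b)‖
              ≤ 1 * Rt := mul_le_mul (halpha (S \ T) Finset.sdiff_subset) (hD T hT)
                (norm_nonneg _) zero_le_one
            _ = Rt := one_mul Rt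
      _ = ((2:ℝ)^S.card - 1) * Rt := hcount
  have hKle : (∏ q ∈ S, (1 - (q:ℝ)⁻¹)) * K ≤ (2:ℝ)^S.card * Rt := by
    rw [← hnormleft, hsplit]
    calc ‖(∑ a ∈ A, ∑ b ∈ B, F (a + b))
          - ∑ T ∈ S.powerset.erase ∅,
              (∏ q ∈ S \ T, α q) * (∑ a ∈ A, ∑ b ∈ B, ∏ q ∈ T, β q (a + b))‖
        ≤ ‖∑ a ∈ A, ∑ b ∈ B, F (a + b)‖ + ‖∑ T ∈ S.powerset.erase ∅,
              (∏ q ∈ S \ T, α q) * (∑ a ∈ A, ∑ b ∈ B, ∏ q ∈ T, β q (a + b))‖ :=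
          norm_sub_le _ _
      _ ≤ Rt + ((2:ℝ)^S.card - 1) * Rt := add_le_add hB1 hY
      _ = (2:ℝ)^S.card * Rt := by ring
  have hlow : ((S.card : ℝ) + 1)⁻¹ * K ≤ (2:ℝ)^S.card * Rt :=
    le_trans (mul_le_mul_of_nonneg_right (inv_card_le_prod S hq2) hKpos.le) hKle
  have hc1 : (0:ℝ) < (S.card:ℝ) + 1 := by positivity
  set c : ℝ := ((S.card:ℝ)+1) * (2:ℝ)^S.card with hc
  have hcnn : 0 ≤ c := by positivity
  have hK2 : K ≤ c * Rt := by
    calc K = ((S.card:ℝ)+1) * (((S.card:ℝ)+1)⁻¹ * K) := by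
          field_simp
      _ ≤ ((S.card:ℝ)+1) * ((2:ℝ)^S.card * Rt) := mul_le_mul_of_nonneg_left hlow hc1.le
      _ = c * Rt := by rw [hc]; ring
  have hRts : Rt * Rt = (p:ℝ) * K := by
    rw [hRt, Real.mul_self_sqrt (by positivity), hK]
    ring
  have hsq : K * K ≤ (c * c * (p:ℝ)) * K := by
    calc K * K ≤ (c * Rt) * (c * Rt) := mul_self_le_mul_self hKpos.le hK2
      _ = (c * c) * (Rt * Rt) := by ring
      _ = (c * c) * ((p:ℝ) * K) := by rw [hRts]
      _ = (c * c * (p:ℝ)) * K := by ring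
  have hKfin : K ≤ c * c * p := le_of_mul_le_mul_right hsq hKpos
  have h2pow : ((S.card:ℝ)+1) ≤ (2:ℝ)^S.card := by
    have h := Nat.lt_two_pow_self (n := S.card)
    have h' : S.card + 1 ≤ 2 ^ S.card := h
    exact_mod_cast h'
  have hcc : c * c ≤ (16:ℝ)^S.card := by
    have h2nn : (0:ℝ) ≤ (2:ℝ)^S.card := by positivity
    calc c * c = (((S.card:ℝ)+1) * ((S.card:ℝ)+1)) * ((2:ℝ)^S.card * (2:ℝ)^S.card) := by
          rw [hc]; ring
      _ ≤ ((2:ℝ)^S.card * (2:ℝ)^S.card) * ((2:ℝ)^S.card * (2:ℝ)^S.card) := by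
          refine mul_le_mul_of_nonneg_right ?_ (by positivity)
          exact mul_le_mul h2pow h2pow (by positivity) h2nn
      _ = (16:ℝ)^S.card := by
          have h16 : (16:ℝ) = 2*2*2*2 := by norm_num
          rw [h16, mul_pow, mul_pow, mul_pow]
          ring
  calc (A.card : ℝ) * B.card = K := by rw [hK]
    _ ≤ c * c * p := hKfin
    _ ≤ 16^S.card * p := mul_le_mul_of_nonneg_right hcc hppos.le





/-- Character sum bound: if every `a + b` with `a ∈ A`, `b ∈ B` is a `q`-th
power residue mod `p` for some prime `q ∣ g`, where `p ≡ 1 (mod rad g)`,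
then `|A| |B| ≤ C(ε) p^(1+ε)`. -/
theorem stmt_16 :
    ∀ ε : ℝ, 0 < ε → ∃ C : ℝ, ∀ g : ℕ, 2 ≤ g →
      ∀ p : ℕ, p.Prime → p ≡ 1 [MOD ∏ q ∈ g.primeFactors, q] →
        ∀ A B : Finset (ZMod p),
          (∀ a ∈ A, ∀ b ∈ B, ∃ q ∈ g.primeFactors, ∃ y : ZMod p, a + b = y ^ q) →
          (A.card : ℝ) * (B.card : ℝ) ≤ C * (p : ℝ) ^ (1 + ε) := by
  intro ε hε
  refine ⟨(Real.exp ((16:ℝ) ^ ((1:ℝ)/ε))) ^ ε, ?_⟩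
  intro g _hg p hp hmod A B hAB
  have hQ : (∏ q ∈ g.primeFactors, q) ∣ p - 1 :=
    (Nat.modEq_iff_dvd' hp.one_lt.le).mp hmod.symm
  have hS : ∀ q ∈ g.primeFactors, q.Prime ∧ q ∣ p - 1 := fun q hq =>
    ⟨Nat.prime_of_mem_primeFactors hq, dvd_trans (Finset.dvd_prod_of_mem _ hq) hQ⟩
  have hmain := main_count p hp g.primeFactors hS A B hAB
  have hq2 : ∀ q ∈ g.primeFactors, 2 ≤ q := fun q hq => (hS q hq).1.two_le
  have hppos : (0:ℝ) < p := by exact_mod_cast hp.pos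
  have hfact : (g.primeFactors.card)! ≤ p := by
    have hp1 : 0 < p - 1 := by
      have := hp.two_le
      omega
    calc (g.primeFactors.card)! ≤ ∏ q ∈ g.primeFactors, q := factorial_le_prod _ hq2
      _ ≤ p - 1 := Nat.le_of_dvd hp1 hQ
      _ ≤ p := Nat.sub_le p 1
  have hC := growth_bound ε hε g.primeFactors.card
  have hfac : (((g.primeFactors.card)! : ℝ)) ^ ε ≤ (p:ℝ) ^ ε :=
    Real.rpow_le_rpow (Nat.cast_nonneg _) (by exact_mod_cast hfact) hε.le
  calc (A.card:ℝ) * B.card ≤ 16 ^ g.primeFactors.card * p := hmain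
    _ ≤ ((Real.exp ((16:ℝ) ^ ((1:ℝ)/ε))) ^ ε * (((g.primeFactors.card)! : ℝ)) ^ ε) * p :=
        mul_le_mul_of_nonneg_right hC hppos.le
    _ ≤ ((Real.exp ((16:ℝ) ^ ((1:ℝ)/ε))) ^ ε * (p:ℝ) ^ ε) * p := by
        refine mul_le_mul_of_nonneg_right (mul_le_mul_of_nonneg_left hfac ?_) hppos.le
        positivity
    _ = (Real.exp ((16:ℝ) ^ ((1:ℝ)/ε))) ^ ε * (p:ℝ) ^ (1+ε) := by
        rw [Real.rpow_add hppos, Real.rpow_one]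
        ring
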